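/- Creation-operator formula via Hermite polynomials: let Φ₀(x,t) = (πħ)^{−1/4}(Ω/μ)^{1/4} exp(−((iρ+Ω)/(2ħμ))x²)·exp(−(i/2)Ωt − (i/(2ħ))κ̃cC₅t), and let â⁺(t) act on differentiable functions f of x by (â⁺(t)f)(x) = (2ħ)^{−1/2}[conj(C(t))·(−iħ∂ₓf(x)) − conj(B(t))·x·f(x)], where B(t) = e^{iΩt}(−ρ+iΩ)/√(Ωμ), C(t) = e^{iΩt}√(μ/Ω). Then for every ν ∈ ℕ and all (x,t): ([â⁺(t)]^ν Φ₀)(x,t) = i^ν·2^{−ν/2}·H_ν(√(Ω/(ħμ))·x)·Φ₀(x,t)·e^{−iΩνt}. -/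

import Mathlib

noncomputable section

/-- Physicists' Hermite polynomials: `H₀ = 1`, `H_{ν+1}(ζ) = 2ζH_ν(ζ) − H_ν′(ζ)`. -/
def hermiteH : ℕ → ℝ → ℝ
  | 0 => fun _ => 1
  | ν + 1 => fun ζ => 2 * ζ * hermiteH ν ζ - deriv (hermiteH ν) ζ

/-- The Gaussian ground state `Φ₀`. -/
def Phi0 (hbar μ ρ c κt C₅ Ω : ℝ) (x t : ℝ) : ℂ :=
  (((Real.pi * hbar) ^ (-(1 / 4 : ℝ)) * (Ω / μ) ^ ((1 / 4 : ℝ)) : ℝ) : ℂ) *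
    Complex.exp (-((Complex.I * (ρ : ℂ) + (Ω : ℂ)) / ((2 * hbar * μ : ℝ) : ℂ)) *
      (x : ℂ) ^ 2) *
    Complex.exp (-(Complex.I / 2) * (Ω : ℂ) * (t : ℂ)
      - (Complex.I / ((2 * hbar : ℝ) : ℂ)) * ((κt * c * C₅ : ℝ) : ℂ) * (t : ℂ))

/-- `B(t) = e^{iΩt}(−ρ+iΩ)/√(Ωμ)`. -/
def Bfun (μ ρ Ω : ℝ) (t : ℝ) : ℂ :=
  Complex.exp (Complex.I * (Ω : ℂ) * (t : ℂ)) *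
    ((-(ρ : ℂ) + Complex.I * (Ω : ℂ)) / (Real.sqrt (Ω * μ) : ℂ))

/-- `C(t) = e^{iΩt}√(μ/Ω)`. -/
def Cfun (μ Ω : ℝ) (t : ℝ) : ℂ :=
  Complex.exp (Complex.I * (Ω : ℂ) * (t : ℂ)) * (Real.sqrt (μ / Ω) : ℂ)

/-- The creation operator
`(â⁺(t)f)(x) = (2ħ)^{−1/2}[conj(C(t))·(−iħ∂ₓf(x)) − conj(B(t))·x·f(x)]`. -/
def adOp (hbar μ ρ Ω : ℝ) (t : ℝ) (f : ℝ → ℂ) (x : ℝ) : ℂ :=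
  ((Real.sqrt (2 * hbar) : ℝ) : ℂ)⁻¹ *
    ((starRingEnd ℂ) (Cfun μ Ω t) * (-Complex.I * (hbar : ℂ) * deriv f x)
      - (starRingEnd ℂ) (Bfun μ ρ Ω t) * (x : ℂ) * f x)

/-- Polynomial version of the physicists' Hermite polynomials. -/
def hermitePoly : ℕ → Polynomial ℝ
  | 0 => 1
  | ν + 1 => 2 * Polynomial.X * hermitePoly ν - Polynomial.derivative (hermitePoly ν)

lemma hermiteH_eq (ν : ℕ) : hermiteH ν = fun ζ => (hermitePoly ν).eval ζ := by
  induction ν with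
  | zero => funext ζ; simp [hermiteH, hermitePoly]
  | succ n ih =>
      funext ζ
      show 2 * ζ * hermiteH n ζ - deriv (hermiteH n) ζ = _
      rw [ih, Polynomial.deriv]
      simp [hermitePoly]

lemma deriv_hermiteH (ν : ℕ) (ζ : ℝ) :
    deriv (hermiteH ν) ζ = ((hermitePoly ν).derivative).eval ζ := by
  rw [hermiteH_eq]
  simp

lemma key_identity (a m h s r x HX HD Φ E1 E2 K : ℂ)
    (ha : a ≠ 0) (hm : m ≠ 0) (hh : h ≠ 0) (hs : s ≠ 0) :
    (s * h)⁻¹ *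
      (E1 * (m / a) *
          (-Complex.I * (h * h) *
            ((K * (a / (h * m)) * HD * Φ +
                K * HX * (-((Complex.I * r + a * a) / (h * h * (m * m))) * x * Φ)) * E2)) -
        E1 * ((-r - Complex.I * (a * a)) / (a * m)) * x * (K * HX * Φ * E2)) =
      K * Complex.I * s⁻¹ * (2 * (a / (h * m) * x) * HX - HD) * Φ * (E2 * E1) := by
  have hX := mul_inv_cancel₀ hm
  have hY := mul_inv_cancel₀ hh
  have hZ := mul_inv_cancel₀ ha
  set A := E1 * m * Complex.I * h * K * a ^ 2 * Φ * HX * x * E2 * s with hA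
  set B := E1 * m * h * K * Φ * HX * r * x * E2 * s with hB
  set F := E1 * m ^ 2 * Complex.I * h ^ 2 * K * a * HD * Φ * E2 * s with hF
  field_simp
  linear_combination E1 * K * Φ * E2 * HX * r * x * Complex.I_mul_I

/-- Creation-operator formula via Hermite polynomials:
`[â⁺(t)]^ν Φ₀ = i^ν·2^{−ν/2}·H_ν(√(Ω/(ħμ))x)·Φ₀·e^{−iΩνt}`. -/
theorem creation_operator_hermite_formula
    (hbar μ ρ c κt C₅ σt Ω : ℝ) (h_hbar : 0 < hbar) (hμ : 0 < μ)
    (hpos : 0 < σt * μ - ρ ^ 2) (hΩ : Ω = Real.sqrt (σt * μ - ρ ^ 2)) :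
    ∀ ν : ℕ, ∀ x t : ℝ,
      (adOp hbar μ ρ Ω t)^[ν] (fun y => Phi0 hbar μ ρ c κt C₅ Ω y t) x
        = Complex.I ^ ν * (((Real.sqrt 2)⁻¹ : ℝ) : ℂ) ^ ν *
            ((hermiteH ν (Real.sqrt (Ω / (hbar * μ)) * x) : ℝ) : ℂ) *
            Phi0 hbar μ ρ c κt C₅ Ω x t *
            Complex.exp (-Complex.I * (Ω : ℂ) * (ν : ℂ) * (t : ℂ)) := by
  have hΩpos : 0 < Ω := by rw [hΩ]; exact Real.sqrt_pos.mpr hpos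
  have hΩne : Ω ≠ 0 := ne_of_gt hΩpos
  have hμne : μ ≠ 0 := ne_of_gt hμ
  have hbne : hbar ≠ 0 := ne_of_gt h_hbar
  have hbC : (hbar : ℂ) ≠ 0 := Complex.ofReal_ne_zero.mpr hbne
  have hμC : (μ : ℂ) ≠ 0 := Complex.ofReal_ne_zero.mpr hμne
  -- derivative of Phi0 in x
  have hPhi : ∀ (t y : ℝ),
      HasDerivAt (fun y : ℝ => Phi0 hbar μ ρ c κt C₅ Ω y t)
        (-((Complex.I * (ρ : ℂ) + (Ω : ℂ)) / ((hbar : ℂ) * (μ : ℂ))) * (y : ℂ) *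
          Phi0 hbar μ ρ c κt C₅ Ω y t) y := by
    intro t y
    set β : ℂ := -((Complex.I * (ρ : ℂ) + (Ω : ℂ)) / ((2 * hbar * μ : ℝ) : ℂ)) with hβ
    have h0 : HasDerivAt (fun z : ℂ => β * z ^ 2) (β * (2 * (y : ℂ))) (y : ℂ) := by
      simpa using (hasDerivAt_pow 2 (y : ℂ)).const_mul β
    have h1 := (h0.cexp).comp_ofReal
    have h2 := (h1.const_mul
        ((((Real.pi * hbar) ^ (-(1 / 4 : ℝ)) * (Ω / μ) ^ ((1 / 4 : ℝ)) : ℝ) : ℂ))).mul_const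
      (Complex.exp (-(Complex.I / 2) * (Ω : ℂ) * (t : ℂ)
        - (Complex.I / ((2 * hbar : ℝ) : ℂ)) * ((κt * c * C₅ : ℝ) : ℂ) * (t : ℂ)))
    have hval : ∀ z : ℝ, Phi0 hbar μ ρ c κt C₅ Ω z t =
        (((Real.pi * hbar) ^ (-(1 / 4 : ℝ)) * (Ω / μ) ^ ((1 / 4 : ℝ)) : ℝ) : ℂ) *
          Complex.exp (β * (z : ℂ) ^ 2) *
          Complex.exp (-(Complex.I / 2) * (Ω : ℂ) * (t : ℂ)
            - (Complex.I / ((2 * hbar : ℝ) : ℂ)) * ((κt * c * C₅ : ℝ) : ℂ) * (t : ℂ)) :=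
      fun z => rfl
    have h3 : (fun y : ℝ => Phi0 hbar μ ρ c κt C₅ Ω y t) =
        fun y : ℝ =>
          (((Real.pi * hbar) ^ (-(1 / 4 : ℝ)) * (Ω / μ) ^ ((1 / 4 : ℝ)) : ℝ) : ℂ) *
            Complex.exp (β * (y : ℂ) ^ 2) *
            Complex.exp (-(Complex.I / 2) * (Ω : ℂ) * (t : ℂ)
              - (Complex.I / ((2 * hbar : ℝ) : ℂ)) * ((κt * c * C₅ : ℝ) : ℂ) * (t : ℂ)) :=
      funext hval
    rw [h3]
    refine h2.congr_deriv ?_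
    rw [hval y, hβ]
    push_cast
    field_simp
  -- derivative of the Hermite factor
  have hH : ∀ (n : ℕ) (y : ℝ),
      HasDerivAt (fun y : ℝ => ((hermiteH n (Real.sqrt (Ω / (hbar * μ)) * y) : ℝ) : ℂ))
        (((Real.sqrt (Ω / (hbar * μ)) *
            deriv (hermiteH n) (Real.sqrt (Ω / (hbar * μ)) * y) : ℝ) : ℂ)) y := by
    intro n y
    have h0 : HasDerivAt (fun y : ℝ => Real.sqrt (Ω / (hbar * μ)) * y)
        (Real.sqrt (Ω / (hbar * μ))) y := by
      simpa using (hasDerivAt_id y).const_mul (Real.sqrt (Ω / (hbar * μ)))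
    have h1 := ((hermitePoly n).hasDerivAt (Real.sqrt (Ω / (hbar * μ)) * y)).comp y h0
    have h2 := h1.ofReal_comp
    rw [hermiteH_eq, Polynomial.deriv]
    refine h2.congr_deriv ?_
    push_cast
    ring
  intro ν
  induction ν with
  | zero =>
      intro x t
      simp [hermiteH]
  | succ n ih =>
      intro x t
      rw [Function.iterate_succ_apply',
        show (adOp hbar μ ρ Ω t)^[n] (fun y => Phi0 hbar μ ρ c κt C₅ Ω y t) =
          fun y => Complex.I ^ n * (((Real.sqrt 2)⁻¹ : ℝ) : ℂ) ^ n *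
            ((hermiteH n (Real.sqrt (Ω / (hbar * μ)) * y) : ℝ) : ℂ) *
            Phi0 hbar μ ρ c κt C₅ Ω y t *
            Complex.exp (-Complex.I * (Ω : ℂ) * (n : ℂ) * (t : ℂ)) from
          funext fun y => ih y t]
      rw [adOp]
      have hd3 := (((hH n x).const_mul
          (Complex.I ^ n * (((Real.sqrt 2)⁻¹ : ℝ) : ℂ) ^ n)).fun_mul (hPhi t x)).mul_const
        (Complex.exp (-Complex.I * (Ω : ℂ) * (n : ℂ) * (t : ℂ)))
      rw [hd3.deriv]
      have ra : Real.sqrt Ω * Real.sqrt Ω = Ω := Real.mul_self_sqrt hΩpos.le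
      have rm : Real.sqrt μ * Real.sqrt μ = μ := Real.mul_self_sqrt hμ.le
      have rh : Real.sqrt hbar * Real.sqrt hbar = hbar := Real.mul_self_sqrt h_hbar.le
      have haC : ((Real.sqrt Ω : ℝ) : ℂ) ≠ 0 :=
        Complex.ofReal_ne_zero.mpr (ne_of_gt (Real.sqrt_pos.mpr hΩpos))
      have hmC : ((Real.sqrt μ : ℝ) : ℂ) ≠ 0 :=
        Complex.ofReal_ne_zero.mpr (ne_of_gt (Real.sqrt_pos.mpr hμ))
      have hhC : ((Real.sqrt hbar : ℝ) : ℂ) ≠ 0 :=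
        Complex.ofReal_ne_zero.mpr (ne_of_gt (Real.sqrt_pos.mpr h_hbar))
      have hsC : ((Real.sqrt 2 : ℝ) : ℂ) ≠ 0 :=
        Complex.ofReal_ne_zero.mpr (ne_of_gt (Real.sqrt_pos.mpr two_pos))
      have dα : Real.sqrt (Ω / (hbar * μ)) = Real.sqrt Ω / (Real.sqrt hbar * Real.sqrt μ) := by
        rw [Real.sqrt_div hΩpos.le, Real.sqrt_mul h_hbar.le]
      have d1 : Real.sqrt (μ / Ω) = Real.sqrt μ / Real.sqrt Ω := Real.sqrt_div hμ.le Ω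
      have d2 : Real.sqrt (Ω * μ) = Real.sqrt Ω * Real.sqrt μ := Real.sqrt_mul hΩpos.le μ
      have d3 : Real.sqrt (2 * hbar) = Real.sqrt 2 * Real.sqrt hbar :=
        Real.sqrt_mul (by norm_num) hbar
      have hc : (starRingEnd ℂ) (Complex.I * (Ω : ℂ) * (t : ℂ))
          = -(Complex.I * (Ω : ℂ) * (t : ℂ)) := by
        simp only [map_mul, Complex.conj_I, Complex.conj_ofReal]
        ring
      have hCc : (starRingEnd ℂ) (Cfun μ Ω t)
          = Complex.exp (-(Complex.I * (Ω : ℂ) * (t : ℂ))) * ((Real.sqrt (μ / Ω) : ℝ) : ℂ) := by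
        rw [Cfun, map_mul, ← Complex.exp_conj, hc, Complex.conj_ofReal]
      have hBc : (starRingEnd ℂ) (Bfun μ ρ Ω t)
          = Complex.exp (-(Complex.I * (Ω : ℂ) * (t : ℂ)))
            * ((-(ρ : ℂ) - Complex.I * (Ω : ℂ)) / ((Real.sqrt (Ω * μ) : ℝ) : ℂ)) := by
        rw [Bfun, map_mul, ← Complex.exp_conj, hc]
        congr 1
        simp only [map_div₀, map_add, map_neg, map_mul, Complex.conj_I, Complex.conj_ofReal]
        ring
      have hrec : hermiteH (n + 1) (Real.sqrt (Ω / (hbar * μ)) * x)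
          = 2 * (Real.sqrt (Ω / (hbar * μ)) * x) * hermiteH n (Real.sqrt (Ω / (hbar * μ)) * x)
            - deriv (hermiteH n) (Real.sqrt (Ω / (hbar * μ)) * x) := rfl
      have hsplit : Complex.exp (-Complex.I * (Ω : ℂ) * ((n + 1 : ℕ) : ℂ) * (t : ℂ))
          = Complex.exp (-Complex.I * (Ω : ℂ) * (n : ℂ) * (t : ℂ))
            * Complex.exp (-(Complex.I * (Ω : ℂ) * (t : ℂ))) := by
        rw [← Complex.exp_add]
        congr 1
        push_cast
        ring
      rw [hCc, hBc, hrec, hsplit, dα, d1, d2, d3]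
      set E1 := Complex.exp (-(Complex.I * (Ω : ℂ) * (t : ℂ))) with hE1
      set E2 := Complex.exp (-Complex.I * (Ω : ℂ) * (n : ℂ) * (t : ℂ)) with hE2
      push_cast
      have cΩ : (Ω : ℂ) = ((Real.sqrt Ω : ℝ) : ℂ) * ((Real.sqrt Ω : ℝ) : ℂ) := by
        rw [← Complex.ofReal_mul, ra]
      have cμ : (μ : ℂ) = ((Real.sqrt μ : ℝ) : ℂ) * ((Real.sqrt μ : ℝ) : ℂ) := by
        rw [← Complex.ofReal_mul, rm]
      have ch : (hbar : ℂ) = ((Real.sqrt hbar : ℝ) : ℂ) * ((Real.sqrt hbar : ℝ) : ℂ) := by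
        rw [← Complex.ofReal_mul, rh]
      rw [cΩ, cμ, ch]
      linear_combination key_identity ((Real.sqrt Ω : ℝ) : ℂ) ((Real.sqrt μ : ℝ) : ℂ)
        ((Real.sqrt hbar : ℝ) : ℂ) ((Real.sqrt 2 : ℝ) : ℂ) (ρ : ℂ) (x : ℂ)
        ((hermiteH n (Real.sqrt Ω / (Real.sqrt hbar * Real.sqrt μ) * x) : ℝ) : ℂ)
        ((deriv (hermiteH n) (Real.sqrt Ω / (Real.sqrt hbar * Real.sqrt μ) * x) : ℝ) : ℂ)
        (Phi0 hbar μ ρ c κt C₅ Ω x t) E1 E2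
        (Complex.I ^ n * (((Real.sqrt 2 : ℝ) : ℂ))⁻¹ ^ n) haC hmC hhC hsC

end
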